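/- Let n ≥ 1, c > 0, r > 0, and let x ∈ ℝⁿ satisfy |xᵢ| = c for every coordinate i (a vertex of the cube [−c,c]ⁿ). Then the Lebesgue volume of the set {ζ ∈ ℝⁿ : ‖ζ‖ ≤ r and ‖x + ζ‖_∞ > c} is at least (1 − 2^{−n}) times the volume of the closed ball B(0, r). Equivalently, if ζ is drawn from the equidistribution on B(0,r), then with probability at least 1 − 2^{−n} the perturbed point x + ζ lies outside the cube [−c,c]ⁿ, so the indicator classifier f of the cube satisfies |f(x) − f(x+ζ)| = 1 with probability at least 1 − 2^{−n}. -/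

import Mathlib

open MeasureTheory
open scoped ENNReal

/-- if `x` is a vertex of the cube `[−c,c]ⁿ` (`|xᵢ| = c` for all `i`,
`c > 0`) and `r > 0`, then the volume of `{ζ : ‖ζ‖ ≤ r, ‖x + ζ‖_∞ > c}` is at least
`(1 − 2⁻ⁿ)` times the volume of the closed ball `B(0,r)`; equivalently, a perturbation
`ζ` equidistributed on `B(0,r)` moves `x` outside the cube with probability at least
`1 − 2⁻ⁿ`, so the cube-indicator classifier `f` satisfies `|f(x) − f(x+ζ)| = 1` with
probability at least `1 − 2⁻ⁿ`. -/
theorem stmt_11 (n : ℕ) (hn : 1 ≤ n) (c r : ℝ) (hc : 0 < c) (hr : 0 < r)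
    (x : EuclideanSpace ℝ (Fin n)) (hx : ∀ i, |x i| = c)
    (f : EuclideanSpace ℝ (Fin n) → ℝ)
    (hf : ∀ y, f y = if ∀ i, |y i| ≤ c then (1 : ℝ) else 0) :
    (1 - ((2 : ℝ≥0∞) ^ n)⁻¹) *
        volume (Metric.closedBall (0 : EuclideanSpace ℝ (Fin n)) r) ≤
      volume {ζ : EuclideanSpace ℝ (Fin n) | ‖ζ‖ ≤ r ∧ ∃ i, c < |x i + ζ i|} ∧
    (1 - ((2 : ℝ≥0∞) ^ n)⁻¹) *
        volume (Metric.closedBall (0 : EuclideanSpace ℝ (Fin n)) r) ≤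
      volume {ζ : EuclideanSpace ℝ (Fin n) | ‖ζ‖ ≤ r ∧ |f x - f (x + ζ)| = 1} := by
  classical
  set B := Metric.closedBall (0 : EuclideanSpace ℝ (Fin n)) r with hB
  set Good : Set (EuclideanSpace ℝ (Fin n)) :=
    {ζ | ‖ζ‖ ≤ r ∧ ∃ i, c < |x i + ζ i|} with hGood
  set Bad : Set (EuclideanSpace ℝ (Fin n)) :=
    {ζ | ‖ζ‖ ≤ r ∧ ∀ i, x i * ζ i ≤ 0} with hBad
  set Bad' : Set (EuclideanSpace ℝ (Fin n)) :=
    {ζ | ‖ζ‖ ≤ r ∧ ∀ i, x i * ζ i < 0} with hBad'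
  have hmeas_coord : ∀ i, Continuous fun ζ : EuclideanSpace ℝ (Fin n) => ζ i := fun i =>
    (EuclideanSpace.proj i (𝕜 := ℝ)).continuous
  have hxne : ∀ i, x i ≠ 0 := by
    intro i h0
    have := hx i
    rw [h0, abs_zero] at this
    exact hc.ne this
  -- coordinate hyperplanes are null
  have hnull : ∀ i, volume {ζ : EuclideanSpace ℝ (Fin n) | ζ i = 0} = 0 := by
    intro i
    have hne : LinearMap.ker (EuclideanSpace.projₗ i (𝕜 := ℝ)) ≠ ⊤ := by
      intro h
      have : (EuclideanSpace.single i (1 : ℝ)) ∈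
          LinearMap.ker (EuclideanSpace.projₗ i (𝕜 := ℝ)) := h ▸ Submodule.mem_top
      simp [LinearMap.mem_ker] at this
    have hset : {ζ : EuclideanSpace ℝ (Fin n) | ζ i = 0} =
        (LinearMap.ker (EuclideanSpace.projₗ i (𝕜 := ℝ)) :
          Set (EuclideanSpace ℝ (Fin n))) := by
      ext ζ
      simp [LinearMap.mem_ker, Set.mem_setOf_eq]
    rw [hset]
    exact Measure.addHaar_submodule _ _ hne
  have hBadBad' : volume Bad ≤ volume Bad' := by
    have hsub : Bad ⊆ Bad' ∪ ⋃ i, {ζ : EuclideanSpace ℝ (Fin n) | ζ i = 0} := by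
      intro ζ hζ
      by_cases h : ∀ i, x i * ζ i < 0
      · exact Or.inl ⟨hζ.1, h⟩
      · push_neg at h
        obtain ⟨i, hi⟩ := h
        have h0 : x i * ζ i = 0 := le_antisymm (hζ.2 i) hi
        exact Or.inr (Set.mem_iUnion.2 ⟨i, by
          simpa [hxne i] using mul_eq_zero.1 h0⟩)
    calc volume Bad
        ≤ volume (Bad' ∪ ⋃ i, {ζ : EuclideanSpace ℝ (Fin n) | ζ i = 0}) := measure_mono hsub
      _ ≤ volume Bad' + volume (⋃ i, {ζ : EuclideanSpace ℝ (Fin n) | ζ i = 0}) :=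
          measure_union_le _ _
      _ ≤ volume Bad' + 0 := by
          gcongr
          exact le_of_eq (measure_iUnion_null fun i => hnull i)
      _ = volume Bad' := by rw [add_zero]
  -- the sign-flip isometries
  have key : (2 : ℝ≥0∞) ^ n * volume Bad' ≤ volume B := by
    set σ : (Fin n → Bool) →
        (EuclideanSpace ℝ (Fin n) ≃ₗᵢ[ℝ] EuclideanSpace ℝ (Fin n)) := fun s =>
      LinearIsometryEquiv.piLpCongrRight 2 fun i =>
        if s i then LinearIsometryEquiv.neg ℝ else LinearIsometryEquiv.refl ℝ ℝ with hσ
    have hσapp : ∀ s (ζ : EuclideanSpace ℝ (Fin n)) i,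
        σ s ζ i = if s i then -ζ i else ζ i := by
      intro s ζ i
      by_cases h : s i <;>
        simp [hσ, LinearIsometryEquiv.piLpCongrRight_apply, h]
    set A : (Fin n → Bool) → Set (EuclideanSpace ℝ (Fin n)) := fun s =>
      {ζ | ‖ζ‖ ≤ r} ∩ ⋂ i,
        {ζ : EuclideanSpace ℝ (Fin n) | if s i then 0 < x i * ζ i else x i * ζ i < 0} with hA
    have hAmem : ∀ s ζ, ζ ∈ A s ↔
        (‖ζ‖ ≤ r ∧ ∀ i, if s i then 0 < x i * ζ i else x i * ζ i < 0) := by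
      intro s ζ
      simp [hA, Set.mem_iInter]
    have hAmeas : ∀ s, MeasurableSet (A s) := by
      intro s
      refine MeasurableSet.inter ?_ (MeasurableSet.iInter fun i => ?_)
      · exact measurableSet_le continuous_norm.measurable measurable_const
      · by_cases h : s i <;> simp only [h, if_true, if_false]
        · exact measurableSet_lt measurable_const
            (measurable_const.mul (hmeas_coord i).measurable)
        · exact measurableSet_lt (measurable_const.mul (hmeas_coord i).measurable)
            measurable_const
    have hApre : ∀ s, (σ s) ⁻¹' (A s) = Bad' := by
      intro s
      ext ζ
      rw [Set.mem_preimage, hAmem]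
      simp only [hBad', Set.mem_setOf_eq]
      constructor
      · rintro ⟨h1, h2⟩
        refine ⟨by rwa [LinearIsometryEquiv.norm_map] at h1, fun i => ?_⟩
        have := h2 i
        rw [hσapp] at this
        by_cases h : s i
        · simp only [h, if_true] at this
          nlinarith
        · simpa [h] using this
      · rintro ⟨h1, h2⟩
        refine ⟨by rwa [LinearIsometryEquiv.norm_map], fun i => ?_⟩
        rw [hσapp]
        by_cases h : s i
        · simp only [h, if_true]
          nlinarith [h2 i]
        · simpa [h] using h2 i
    have hAvol : ∀ s, volume (A s) = volume Bad' := by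
      intro s
      rw [← hApre s]
      exact ((σ s).measurePreserving.measure_preimage (hAmeas s).nullMeasurableSet).symm
    have hAsub : ∀ s, A s ⊆ B := fun s ζ hζ => by
      have := ((hAmem s ζ).1 hζ).1
      simpa [hB, Metric.mem_closedBall, dist_zero_right] using this
    have hdisj : ((Finset.univ : Finset (Fin n → Bool)) : Set (Fin n → Bool)).PairwiseDisjoint A := by
      intro s _ t _ hst
      rw [Function.onFun, Set.disjoint_left]
      intro ζ hs ht
      have hs' := ((hAmem s ζ).1 hs).2
      have ht' := ((hAmem t ζ).1 ht).2
      apply hst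
      funext i
      by_contra hi
      have h1 := hs' i
      have h2 := ht' i
      rcases Bool.eq_false_or_eq_true (s i) with h | h <;>
        rcases Bool.eq_false_or_eq_true (t i) with h' | h'
      · exact hi (h.trans h'.symm)
      · rw [h] at h1; rw [h'] at h2; simp at h1 h2; linarith
      · rw [h] at h1; rw [h'] at h2; simp at h1 h2; linarith
      · exact hi (h.trans h'.symm)
    calc (2 : ℝ≥0∞) ^ n * volume Bad'
        = ∑ s : Fin n → Bool, volume (A s) := by
          simp only [hAvol, Finset.sum_const, Finset.card_univ]
          rw [Fintype.card_fun]
          simp [nsmul_eq_mul, mul_comm]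
      _ = volume (⋃ s ∈ (Finset.univ : Finset (Fin n → Bool)), A s) :=
          (measure_biUnion_finset hdisj fun s _ => hAmeas s).symm
      _ ≤ volume B := by
          refine measure_mono fun ζ hζ => ?_
          simp only [Set.mem_iUnion] at hζ
          obtain ⟨s, _, hs⟩ := hζ
          exact hAsub s hs
  -- main bound
  have hBfin : volume B ≠ ⊤ := measure_closedBall_lt_top.ne
  have hcover : volume B ≤ volume Good + volume Bad := by
    refine le_trans (measure_mono ?_) (measure_union_le _ _)
    intro ζ hζ
    have hζr : ‖ζ‖ ≤ r := by
      simpa [hB, Metric.mem_closedBall, dist_zero_right] using hζ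
    by_cases h : ∀ i, x i * ζ i ≤ 0
    · exact Or.inr ⟨hζr, h⟩
    · push_neg at h
      obtain ⟨i, hi⟩ := h
      refine Or.inl ⟨hζr, i, ?_⟩
      rcases (abs_eq hc.le).1 (hx i) with h' | h'
      · have hζi : 0 < ζ i := by nlinarith
        calc c < c + ζ i := by linarith
          _ = x i + ζ i := by rw [h']
          _ ≤ |x i + ζ i| := le_abs_self _
      · have hζi : ζ i < 0 := by nlinarith
        calc c < -(x i + ζ i) := by rw [h']; linarith
          _ ≤ |x i + ζ i| := neg_le_abs _
  have hBadsmall : volume Bad ≤ ((2 : ℝ≥0∞) ^ n)⁻¹ * volume B := by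
    have h2 : ((2 : ℝ≥0∞) ^ n) ≠ 0 := by positivity
    have h2' : ((2 : ℝ≥0∞) ^ n) ≠ ⊤ := ENNReal.pow_ne_top (by norm_num)
    calc volume Bad = ((2 : ℝ≥0∞) ^ n)⁻¹ * ((2 : ℝ≥0∞) ^ n * volume Bad) := by
          rw [← mul_assoc, ENNReal.inv_mul_cancel h2 h2', one_mul]
      _ ≤ ((2 : ℝ≥0∞) ^ n)⁻¹ * volume B := by
          gcongr
          calc (2 : ℝ≥0∞) ^ n * volume Bad ≤ (2 : ℝ≥0∞) ^ n * volume Bad' := by gcongr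
            _ ≤ volume B := key
  have hmain : (1 - ((2 : ℝ≥0∞) ^ n)⁻¹) * volume B ≤ volume Good := by
    rw [ENNReal.sub_mul (fun _ _ => hBfin), one_mul, tsub_le_iff_right]
    calc volume B ≤ volume Good + volume Bad := hcover
      _ ≤ volume Good + ((2 : ℝ≥0∞) ^ n)⁻¹ * volume B := by gcongr
  refine ⟨hmain, le_trans hmain (measure_mono ?_)⟩
  rintro ζ ⟨hζr, i, hi⟩
  refine ⟨hζr, ?_⟩
  have hfx : f x = 1 := by
    rw [hf]
    exact if_pos fun j => (hx j).le
  have hfxζ : f (x + ζ) = 0 := by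
    rw [hf]
    refine if_neg ?_
    push_neg
    exact ⟨i, by simpa [PiLp.add_apply] using hi⟩
  rw [hfx, hfxζ]
  norm_num
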